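/- Let v_n = (1 + (2 + (3 + ... + n^{1/n})^{1/(n-1)})...)^{1/1}, i.e., the n-th approximant of the continued radical with a_k = r_k = k (so v_n = 1 + sqrt(2 + cbrt(3 + ...))). Then for every n ≥ 1, v_{n+1} - v_n ≤ (∏_{i=1}^{n+1} i^{1/i}) / (n!)^2 ≤ 3^{(n+1)/3} / (n!)^2. -/

import Mathlib

/-- `rad a r n i = (a i + (a (i+1) + ⋯ + (a n) ^ (1/r n)) ^ (1/r (i+1))) ^ (1/r i)`. -/
noncomputable def rad (a : ℕ → ℝ) (r : ℕ → ℕ) (n : ℕ) : ℕ → ℝ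
  | i => if _ : i ≤ n then (a i + rad a r n (i + 1)) ^ ((r i : ℝ)⁻¹) else 0
termination_by i => n + 1 - i
decreasing_by omega

/-- The `n`-th approximant of `1 + sqrt (2 + (3 + (4 + ⋯) ^ (1/4)) ^ (1/3))`,
with `a k = r k = k`. -/
noncomputable def v (n : ℕ) : ℝ := rad (fun k => (k : ℝ)) (fun k => k) n 1


noncomputable def w (m i : ℕ) : ℝ := rad (fun k => (k : ℝ)) (fun k => k) m i

lemma w_of_le {m i : ℕ} (h : i ≤ m) : w m i = ((i : ℝ) + w m (i + 1)) ^ ((i : ℝ)⁻¹) := by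
  rw [w, rad, dif_pos h]; rfl

lemma w_of_gt {m i : ℕ} (h : m < i) : w m i = 0 := by
  rw [w, rad, dif_neg (by omega)]

lemma w_nonneg (m i : ℕ) : 0 ≤ w m i := by
  have key : ∀ k i, m + 1 - i ≤ k → 0 ≤ w m i := by
    intro k
    induction k with
    | zero => intro i hi; rw [w_of_gt (by omega)]
    | succ k ih =>
      intro i hi
      by_cases h : i ≤ m
      · rw [w_of_le h]
        have h2 := ih (i + 1) (by omega)
        exact Real.rpow_nonneg (add_nonneg (Nat.cast_nonneg i) h2) _
      · rw [w_of_gt (by omega)]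
  exact key (m + 1 - i) i le_rfl

lemma w_mono (m i : ℕ) : w m i ≤ w (m + 1) i := by
  have key : ∀ k i, m + 2 - i ≤ k → w m i ≤ w (m + 1) i := by
    intro k
    induction k with
    | zero =>
      intro i hi
      rw [w_of_gt (show m < i by omega), w_of_gt (show m + 1 < i by omega)]
    | succ k ih =>
      intro i hi
      by_cases h : i ≤ m
      · rw [w_of_le (show i ≤ m from h), w_of_le (show i ≤ m + 1 by omega)]
        have h2 := ih (i + 1) (by omega)
        have h0 : (0:ℝ) ≤ (i : ℝ) + w m (i + 1) :=
          add_nonneg (Nat.cast_nonneg i) (w_nonneg m (i + 1))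
        exact Real.rpow_le_rpow h0 (by linarith) (by positivity)
      · rw [w_of_gt (show m < i by omega)]
        exact w_nonneg _ _
  exact key (m + 2 - i) i le_rfl

/-- One propagation step. -/
lemma w_step {m i : ℕ} (h1 : 1 ≤ i) (h2 : i ≤ m) :
    w (m + 1) i - w m i ≤
      (i : ℝ) ^ ((i : ℝ)⁻¹) / (i : ℝ) ^ 2 * (w (m + 1) (i + 1) - w m (i + 1)) := by
  set Y : ℝ := (i : ℝ) + w m (i + 1) with hYdef
  set X : ℝ := (i : ℝ) + w (m + 1) (i + 1) with hXdef
  have hi1 : (1 : ℝ) ≤ (i : ℝ) := by exact_mod_cast h1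
  have hipos : (0 : ℝ) < (i : ℝ) := by linarith
  have hYi : (i : ℝ) ≤ Y := le_add_of_nonneg_right (w_nonneg m (i + 1))
  have hYpos : (0 : ℝ) < Y := lt_of_lt_of_le hipos hYi
  have hXY : Y ≤ X := add_le_add_right (w_mono m (i + 1)) _
  have hXpos : (0 : ℝ) < X := lt_of_lt_of_le hYpos hXY
  set p : ℝ := (i : ℝ)⁻¹ with hpdef
  have hp0 : (0 : ℝ) < p := by positivity
  have hp1 : p ≤ 1 := by rw [hpdef]; exact inv_le_one_of_one_le₀ hi1
  rw [w_of_le (show i ≤ m + 1 by omega), w_of_le (show i ≤ m from h2)]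
  have key : X ^ p - Y ^ p ≤ p * Y ^ (p - 1) * (X - Y) := by
    have hs : (0 : ℝ) ≤ (X - Y) / Y := div_nonneg (by linarith) hYpos.le
    have hb := rpow_one_add_le_one_add_mul_self (s := (X - Y) / Y) (by linarith)
      hp0.le hp1
    have hX : X = Y * (1 + (X - Y) / Y) := by field_simp; ring
    have h3 : X ^ p = Y ^ p * (1 + (X - Y) / Y) ^ p := by
      rw [← Real.mul_rpow hYpos.le (by linarith), ← hX]
    have h4 : X ^ p ≤ Y ^ p * (1 + p * ((X - Y) / Y)) := by
      rw [h3]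
      exact mul_le_mul_of_nonneg_left hb (Real.rpow_nonneg hYpos.le _)
    have h5 : Y ^ p * (1 + p * ((X - Y) / Y)) = Y ^ p + p * (Y ^ p / Y) * (X - Y) := by
      field_simp
    have h6 : Y ^ p / Y = Y ^ (p - 1) := (Real.rpow_sub_one hYpos.ne' p).symm
    rw [h5, h6] at h4
    linarith
  have hB : Y ^ (p - 1) ≤ (i : ℝ) ^ (p - 1) :=
    Real.rpow_le_rpow_of_nonpos hipos hYi (by linarith)
  have hchain : p * Y ^ (p - 1) * (X - Y) ≤ p * (i : ℝ) ^ (p - 1) * (X - Y) := by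
    have := mul_le_mul_of_nonneg_left hB hp0.le
    exact mul_le_mul_of_nonneg_right this (by linarith)
  have hfinal : p * (i : ℝ) ^ (p - 1) = (i : ℝ) ^ p / (i : ℝ) ^ 2 := by
    rw [Real.rpow_sub_one hipos.ne', hpdef]
    ring
  calc X ^ p - Y ^ p ≤ p * Y ^ (p - 1) * (X - Y) := key
    _ ≤ p * (i : ℝ) ^ (p - 1) * (X - Y) := hchain
    _ = (i : ℝ) ^ p / (i : ℝ) ^ 2 * (X - Y) := by rw [hfinal]
    _ = (i : ℝ) ^ p / (i : ℝ) ^ 2 * (w (m + 1) (i + 1) - w m (i + 1)) := by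
        rw [hXdef, hYdef]; ring

lemma w_main (m : ℕ) : ∀ k i, 1 ≤ i → i ≤ m + 1 → m + 1 - i ≤ k →
    w (m + 1) i - w m i ≤
      (∏ j ∈ Finset.Icc i m, (j : ℝ) ^ ((j : ℝ)⁻¹) / (j : ℝ) ^ 2) *
        ((m + 1 : ℕ) : ℝ) ^ (((m + 1 : ℕ) : ℝ))⁻¹ := by
  have base : ∀ i, i = m + 1 →
      w (m + 1) i - w m i ≤
        (∏ j ∈ Finset.Icc i m, (j : ℝ) ^ ((j : ℝ)⁻¹) / (j : ℝ) ^ 2) *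
          ((m + 1 : ℕ) : ℝ) ^ (((m + 1 : ℕ) : ℝ))⁻¹ := by
    rintro i rfl
    rw [w_of_gt (show m < m + 1 by omega), w_of_le (le_refl (m + 1)),
      w_of_gt (show m + 1 < m + 1 + 1 by omega)]
    rw [Finset.Icc_eq_empty (by omega), Finset.prod_empty]
    simp
  intro k
  induction k with
  | zero =>
    intro i hi1 hi2 hk
    exact base i (by omega)
  | succ k ih =>
    intro i hi1 hi2 hk
    by_cases h : i ≤ m
    · have step := w_step hi1 h
      have ihs := ih (i + 1) (by omega) (by omega) (by omega)
      have cnn : (0 : ℝ) ≤ (i : ℝ) ^ ((i : ℝ)⁻¹) / (i : ℝ) ^ 2 := by positivity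
      have key : w (m + 1) i - w m i ≤
          (i : ℝ) ^ ((i : ℝ)⁻¹) / (i : ℝ) ^ 2 *
            ((∏ j ∈ Finset.Icc (i + 1) m, (j : ℝ) ^ ((j : ℝ)⁻¹) / (j : ℝ) ^ 2) *
              ((m + 1 : ℕ) : ℝ) ^ (((m + 1 : ℕ) : ℝ))⁻¹) :=
        le_trans step (mul_le_mul_of_nonneg_left ihs cnn)
      have hset : Finset.Icc i m = insert i (Finset.Icc (i + 1) m) := by
        ext x; simp only [Finset.mem_Icc, Finset.mem_insert]; omega
      have hnotmem : i ∉ Finset.Icc (i + 1) m := by simp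
      have hprod : ∏ j ∈ Finset.Icc i m, (j : ℝ) ^ ((j : ℝ)⁻¹) / (j : ℝ) ^ 2 =
          (i : ℝ) ^ ((i : ℝ)⁻¹) / (i : ℝ) ^ 2 *
            ∏ j ∈ Finset.Icc (i + 1) m, (j : ℝ) ^ ((j : ℝ)⁻¹) / (j : ℝ) ^ 2 := by
        rw [hset, Finset.prod_insert hnotmem]
      rw [hprod, mul_assoc]
      exact key
    · exact base i (by omega)

lemma cube_le_three_pow (i : ℕ) : i ^ 3 ≤ 3 ^ i := by
  induction i with
  | zero => norm_num
  | succ k ih =>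
    rcases lt_or_ge k 3 with h | h
    · interval_cases k <;> norm_num
    · have h1 : (k + 1) ^ 3 ≤ 3 * k ^ 3 := by
        zify
        zify at h
        nlinarith [h, sq_nonneg ((k : ℤ) - 1), sq_nonneg (k : ℤ)]
      calc (k + 1) ^ 3 ≤ 3 * k ^ 3 := h1
        _ ≤ 3 * 3 ^ k := by omega
        _ = 3 ^ (k + 1) := by ring

lemma term_le (i : ℕ) : (i : ℝ) ^ ((i : ℝ)⁻¹) ≤ (3 : ℝ) ^ ((3 : ℝ)⁻¹) := by
  rcases Nat.eq_zero_or_pos i with rfl | hi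
  · simp only [Nat.cast_zero, inv_zero, Real.rpow_zero]
    calc (1 : ℝ) = (3 : ℝ) ^ (0 : ℝ) := by simp
      _ ≤ (3 : ℝ) ^ ((3 : ℝ)⁻¹) :=
        Real.rpow_le_rpow_of_exponent_le (by norm_num) (by norm_num)
  · have hipos : (0 : ℝ) < (i : ℝ) := by exact_mod_cast hi
    have hz : (0 : ℝ) < ((3 * i : ℕ) : ℝ) := by positivity
    rw [← Real.rpow_le_rpow_iff (Real.rpow_nonneg hipos.le _)
      (Real.rpow_nonneg (by norm_num : (0:ℝ) ≤ 3) _) hz]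
    rw [← Real.rpow_mul hipos.le, ← Real.rpow_mul (by norm_num : (0:ℝ) ≤ 3)]
    have e1 : (i : ℝ)⁻¹ * ((3 * i : ℕ) : ℝ) = 3 := by
      push_cast; field_simp
    have e2 : (3 : ℝ)⁻¹ * ((3 * i : ℕ) : ℝ) = (i : ℝ) := by
      push_cast; field_simp
    rw [e1, e2]
    have h := cube_le_three_pow i
    calc (i : ℝ) ^ (3 : ℝ) = ((i ^ 3 : ℕ) : ℝ) := by
          rw [show (3:ℝ) = ((3:ℕ):ℝ) by norm_num, Real.rpow_natCast]; push_cast; ring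
      _ ≤ ((3 ^ i : ℕ) : ℝ) := by exact_mod_cast h
      _ = (3 : ℝ) ^ ((i : ℕ) : ℝ) := by rw [Real.rpow_natCast]; push_cast; ring

theorem example_radical_inequality :
    ∀ n, 1 ≤ n →
      v (n + 1) - v n ≤
          (∏ i ∈ Finset.Icc 1 (n + 1), (i : ℝ) ^ ((i : ℝ)⁻¹)) / ((Nat.factorial n : ℝ)) ^ 2 ∧
      (∏ i ∈ Finset.Icc 1 (n + 1), (i : ℝ) ^ ((i : ℝ)⁻¹)) / ((Nat.factorial n : ℝ)) ^ 2 ≤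
          (3 : ℝ) ^ (((n : ℝ) + 1) / 3) / ((Nat.factorial n : ℝ)) ^ 2 := by
  intro n hn
  have hfact : ((Nat.factorial n : ℝ)) = ∏ j ∈ Finset.Icc 1 n, (j : ℝ) := by
    rw [← Nat.cast_prod]
    congr 1
    rw [← Finset.Ico_add_one_right_eq_Icc, Finset.prod_Ico_id_eq_factorial]
  have hsq : ∏ j ∈ Finset.Icc 1 n, ((j : ℝ)) ^ 2 = ((Nat.factorial n : ℝ)) ^ 2 := by
    rw [Finset.prod_pow, ← hfact]
  constructor
  · have main := w_main n n 1 le_rfl (by omega) (by omega)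
    have hv : v (n + 1) - v n = w (n + 1) 1 - w n 1 := rfl
    rw [hv]
    refine le_trans main (le_of_eq ?_)
    rw [Finset.prod_div_distrib, hsq, div_mul_eq_mul_div,
      ← Finset.prod_Icc_succ_top (show 1 ≤ n + 1 by omega)]
  · have hp : (∏ i ∈ Finset.Icc 1 (n + 1), (i : ℝ) ^ ((i : ℝ)⁻¹)) ≤
        (3 : ℝ) ^ (((n : ℝ) + 1) / 3) := by
      calc (∏ i ∈ Finset.Icc 1 (n + 1), (i : ℝ) ^ ((i : ℝ)⁻¹))
          ≤ ∏ _i ∈ Finset.Icc 1 (n + 1), (3 : ℝ) ^ ((3 : ℝ)⁻¹) :=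
            Finset.prod_le_prod (fun i _ => Real.rpow_nonneg (Nat.cast_nonneg i) _)
              (fun i _ => term_le i)
        _ = ((3 : ℝ) ^ ((3 : ℝ)⁻¹)) ^ (n + 1) := by
            rw [Finset.prod_const, Nat.card_Icc]; congr 1
        _ = (3 : ℝ) ^ (((n : ℝ) + 1) / 3) := by
            rw [← Real.rpow_natCast ((3 : ℝ) ^ ((3 : ℝ)⁻¹)) (n + 1),
              ← Real.rpow_mul (by norm_num : (0:ℝ) ≤ 3)]
            congr 1
            push_cast
            ring
    have hd : (0 : ℝ) < ((Nat.factorial n : ℝ)) ^ 2 := by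
      have := n.factorial_pos
      positivity
    exact div_le_div_of_nonneg_right hp hd.le |>.trans_eq rfl
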